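/- Strict positive definiteness of the Hessian: let u be a random nonnegative vector in R^{N+1} (N ≥ q) with P(u_0 > 0) = 1 and E u_j^2 < ∞ for all j, and h* ∈ R_{≥0}^{q+1}. The matrix H(h) ∈ R^{(q+1)×(q+1)} with entries H(h)_{kl} = E Σ_{j=0}^N ((T(h*)u)_j/(T(h)u)_j^2) u_{j-k} u_{j-l} is strictly positive definite for every h at which all expectations are finite and the denominators a.s. positive, provided h* has at least one strictly positive component h*_p for each p ∈ {0,...,q} (e.g., h* strictly positive). -/

import Mathlib

open scoped BigOperators
open MeasureTheory

/-- The convolution `(T(h)u)_i = ∑_{k=0}^{min(i,q)} h_k u_{i-k}`. -/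
def conv (q N : ℕ) (h : Fin (q + 1) → ℝ) (u : Fin (N + 1) → ℝ) : Fin (N + 1) → ℝ :=
  fun i => ∑ k : Fin (q + 1),
    if (k : ℕ) ≤ (i : ℕ) then
      h k * u ⟨(i : ℕ) - (k : ℕ), Nat.lt_of_le_of_lt (Nat.sub_le _ _) i.isLt⟩
    else 0

/-- `u_{j-k}` with the convention `u_i = 0` for `i < 0`. -/
def shift (q N : ℕ) (u : Fin (N + 1) → ℝ) (j : Fin (N + 1)) (k : Fin (q + 1)) : ℝ :=
  if (k : ℕ) ≤ (j : ℕ) then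
    u ⟨(j : ℕ) - (k : ℕ), Nat.lt_of_le_of_lt (Nat.sub_le _ _) j.isLt⟩
  else 0

lemma triangular (q N : ℕ) (hqN : q ≤ N) (w : Fin (N+1) → ℝ) (hw : 0 < w 0)
    (x : Fin (q+1) → ℝ)
    (hz : ∀ j : Fin (q+1), ∑ k : Fin (q+1),
      x k * shift q N w ⟨(j : ℕ), by omega⟩ k = 0) :
    x = 0 := by
  have H : ∀ n : ℕ, ∀ j : Fin (q+1), (j : ℕ) = n → x j = 0 := by
    intro n
    induction n using Nat.strong_induction_on with
    | _ n ih =>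
      intro j hj
      have h0 := hz j
      rw [Finset.sum_eq_single j] at h0
      · have hs : shift q N w ⟨(j : ℕ), by omega⟩ j = w 0 := by
          simp [shift]
        rw [hs] at h0
        exact (mul_eq_zero.mp h0).resolve_right (ne_of_gt hw)
      · intro k _ hk
        by_cases hkle : (k : ℕ) ≤ (j : ℕ)
        · have hklt : (k : ℕ) < n := by
            rcases lt_or_eq_of_le hkle with h' | h'
            · omega
            · exact absurd (Fin.ext h') hk
          rw [ih (k : ℕ) hklt k rfl, zero_mul]
        · simp [shift, hkle]
      · intro hj'; exact absurd (Finset.mem_univ j) hj'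
  funext j
  exact H (j : ℕ) j rfl

/-- strict positive definiteness of the Hessian
`H(h)_{kl} = E ∑_{j=0}^N ((T(h*)u)_j/(T(h)u)_j²) u_{j-k} u_{j-l}` of the limit
criterion, when `P(u₀ > 0) = 1`, `E u_j² < ∞`, `h*` is strictly positive, and the
denominators are a.s. positive with all expectations finite. -/
theorem hessian_posDef
    {Ω : Type*} [MeasurableSpace Ω] (μ : Measure Ω) [IsProbabilityMeasure μ]
    (q N : ℕ) (hqN : q ≤ N)
    (u : Ω → Fin (N + 1) → ℝ) (hu_meas : Measurable u)
    (hu_nonneg : ∀ᵐ ω ∂μ, ∀ i, 0 ≤ u ω i)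
    (hu0 : ∀ᵐ ω ∂μ, 0 < u ω 0)
    (hu_sq : ∀ j : Fin (N + 1), Integrable (fun ω => (u ω j) ^ 2) μ)
    (hstar h : Fin (q + 1) → ℝ)
    (hstar_pos : ∀ p, 0 < hstar p) (h_nonneg : ∀ k, 0 ≤ h k)
    (hden : ∀ᵐ ω ∂μ, ∀ j : Fin (N + 1), 0 < conv q N h (u ω) j)
    (hint : ∀ k l : Fin (q + 1), Integrable (fun ω =>
      ∑ j : Fin (N + 1), (conv q N hstar (u ω) j / (conv q N h (u ω) j) ^ 2)
        * shift q N (u ω) j k * shift q N (u ω) j l) μ) :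
    (Matrix.of fun k l : Fin (q + 1) =>
      ∫ ω, ∑ j : Fin (N + 1), (conv q N hstar (u ω) j / (conv q N h (u ω) j) ^ 2)
        * shift q N (u ω) j k * shift q N (u ω) j l ∂μ).PosDef := by
  classical
  set c : Ω → Fin (N + 1) → ℝ := fun ω j =>
    conv q N hstar (u ω) j / (conv q N h (u ω) j) ^ 2 with hc
  set g : Fin (q + 1) → Fin (q + 1) → Ω → ℝ := fun k l ω =>
    ∑ j : Fin (N + 1), c ω j * shift q N (u ω) j k * shift q N (u ω) j l with hgdef
  have hgint : ∀ k l, Integrable (g k l) μ := fun k l => hint k l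
  rw [Matrix.posDef_iff_dotProduct_mulVec]
  constructor
  · -- Hermitian
    ext k l
    simp only [Matrix.conjTranspose_apply, Matrix.of_apply, star_trivial]
    refine integral_congr_ae (Filter.Eventually.of_forall fun ω => ?_)
    exact Finset.sum_congr rfl fun j _ => by ring
  · intro x hx
    have hF : ∀ k l, Integrable (fun ω => x k * x l * g k l ω) μ := fun k l =>
      (hgint k l).const_mul _
    set f : Ω → ℝ := fun ω =>
      ∑ j : Fin (N + 1), c ω j * (∑ k : Fin (q + 1), x k * shift q N (u ω) j k) ^ 2 with hfdef
    have swap : ∀ (A : Fin (q+1) → Fin (q+1) → Fin (N+1) → ℝ),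
        (∑ k : Fin (q+1), ∑ l : Fin (q+1), ∑ j : Fin (N+1), A k l j)
        = ∑ j : Fin (N+1), ∑ k : Fin (q+1), ∑ l : Fin (q+1), A k l j := by
      intro A
      calc (∑ k : Fin (q+1), ∑ l : Fin (q+1), ∑ j : Fin (N+1), A k l j)
          = ∑ k : Fin (q+1), ∑ j : Fin (N+1), ∑ l : Fin (q+1), A k l j :=
            Finset.sum_congr rfl fun k _ => Finset.sum_comm
        _ = ∑ j : Fin (N+1), ∑ k : Fin (q+1), ∑ l : Fin (q+1), A k l j :=
            Finset.sum_comm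
    have pointwise : ∀ ω, (∑ k : Fin (q + 1), ∑ l : Fin (q + 1), x k * x l * g k l ω) = f ω := by
      intro ω
      simp only [hgdef, hfdef, Finset.mul_sum]
      rw [swap fun k l j => x k * x l * (c ω j * shift q N (u ω) j k * shift q N (u ω) j l)]
      refine Finset.sum_congr rfl fun j _ => ?_
      rw [sq, Finset.sum_mul_sum, Finset.mul_sum]
      refine Finset.sum_congr rfl fun k _ => ?_
      rw [Finset.mul_sum]
      exact Finset.sum_congr rfl fun l _ => by ring
    have hfint : Integrable f μ := by
      have : Integrable (fun ω => ∑ k : Fin (q + 1), ∑ l : Fin (q + 1),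
          x k * x l * g k l ω) μ :=
        integrable_finset_sum _ fun k _ => integrable_finset_sum _ fun l _ => hF k l
      exact this.congr (Filter.Eventually.of_forall pointwise)
    show 0 < dotProduct (star x)
      ((Matrix.of fun k l : Fin (q + 1) => ∫ ω, g k l ω ∂μ).mulVec x)
    have e1 : dotProduct (star x)
        ((Matrix.of fun k l : Fin (q + 1) => ∫ ω, g k l ω ∂μ).mulVec x)
        = ∑ k : Fin (q + 1), ∑ l : Fin (q + 1), ∫ ω, x k * x l * g k l ω ∂μ := by
      simp only [dotProduct, Matrix.mulVec, Matrix.of_apply, Pi.star_apply,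
        star_trivial, Finset.mul_sum]
      refine Finset.sum_congr rfl fun k _ => Finset.sum_congr rfl fun l _ => ?_
      rw [integral_const_mul]
      ring
    have e2 : (∑ k : Fin (q + 1), ∑ l : Fin (q + 1), ∫ ω, x k * x l * g k l ω ∂μ)
        = ∫ ω, f ω ∂μ := by
      calc (∑ k : Fin (q + 1), ∑ l : Fin (q + 1), ∫ ω, x k * x l * g k l ω ∂μ)
          = ∑ k : Fin (q + 1), ∫ ω, ∑ l : Fin (q + 1), x k * x l * g k l ω ∂μ :=
            Finset.sum_congr rfl fun k _ =>
              (integral_finset_sum _ fun l _ => hF k l).symm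
        _ = ∫ ω, ∑ k : Fin (q + 1), ∑ l : Fin (q + 1), x k * x l * g k l ω ∂μ :=
            (integral_finset_sum _ fun k _ =>
              integrable_finset_sum _ fun l _ => hF k l).symm
        _ = ∫ ω, f ω ∂μ :=
            integral_congr_ae (Filter.Eventually.of_forall pointwise)
    rw [e1, e2]
    -- positivity of the integral
    have hae : ∀ᵐ ω ∂μ, 0 < f ω := by
      filter_upwards [hu_nonneg, hu0, hden] with ω hnn h0 hd
      have hcnn : ∀ j : Fin (N + 1), 0 ≤ c ω j := by
        intro j
        refine div_nonneg (Finset.sum_nonneg fun k _ => ?_) (sq_nonneg _)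
        split
        · exact mul_nonneg (le_of_lt (hstar_pos k)) (hnn _)
        · exact le_refl 0
      have hterm_nn : ∀ j ∈ Finset.univ, (0:ℝ) ≤
          c ω j * (∑ k : Fin (q + 1), x k * shift q N (u ω) j k) ^ 2 :=
        fun j _ => mul_nonneg (hcnn j) (sq_nonneg _)
      have hxne : ∃ j : Fin (q + 1),
          (∑ k : Fin (q + 1), x k * shift q N (u ω) ⟨(j : ℕ), by omega⟩ k) ≠ 0 := by
        by_contra hall
        push_neg at hall
        exact hx (triangular q N hqN (u ω) h0 x hall)
      obtain ⟨j0, hj0⟩ := hxne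
      refine Finset.sum_pos' hterm_nn ⟨⟨(j0 : ℕ), by omega⟩, Finset.mem_univ _, ?_⟩
      have hnum : 0 < conv q N hstar (u ω) ⟨(j0 : ℕ), by omega⟩ := by
        refine Finset.sum_pos' (fun k _ => ?_) ⟨j0, Finset.mem_univ _, ?_⟩
        · split
          · exact mul_nonneg (le_of_lt (hstar_pos k)) (hnn _)
          · exact le_refl 0
        · have hidx : ((⟨(j0 : ℕ) - (j0 : ℕ), by omega⟩ : Fin (N + 1))) = 0 := by
            ext; simp
          simp only [le_refl, if_pos, hidx]
          exact mul_pos (hstar_pos j0) h0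
      have hcpos : 0 < c ω ⟨(j0 : ℕ), by omega⟩ :=
        div_pos hnum (pow_pos (hd _) 2)
      exact mul_pos hcpos
        (lt_of_le_of_ne (sq_nonneg _) (Ne.symm (pow_ne_zero 2 hj0)))
    rw [integral_pos_iff_support_of_nonneg_ae (hae.mono fun ω hω => le_of_lt hω) hfint]
    have hcompl : μ (Function.support f)ᶜ = 0 := by
      refine measure_mono_null (fun ω hω => ?_) (ae_iff.mp hae)
      simp only [Set.mem_compl_iff, Function.mem_support, not_not] at hω
      simp [hω]
    rw [pos_iff_ne_zero]
    intro hz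
    have hle := measure_union_le (μ := μ) (Function.support f) (Function.support f)ᶜ
    rw [Set.union_compl_self, hz, hcompl] at hle
    simp [measure_univ] at hle
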